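/- For n ≥ 1, the number of plane trees with 2n edges and an even number of leaves equals the number of plane trees with 2n edges and an odd number of leaves. -/

import Mathlib

/-- For n ≥ 1, the number of plane trees with 2n edges and an even number of leaves equals
the number with an odd number of leaves.  The number of plane trees with m edges and k leaves
is the Narayana number N(m,k) = (1/m) C(m,k) C(m,k-1). -/
theorem even_leaves_eq_odd_leaves (n : ℕ) (hn : 1 ≤ n) :
    ∑ k ∈ (Finset.Icc 1 (2 * n)).filter (fun k => Even k),
        (((2 * n).choose k * (2 * n).choose (k - 1) : ℚ) / (2 * n))
      = ∑ k ∈ (Finset.Icc 1 (2 * n)).filter (fun k => Odd k),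
        (((2 * n).choose k * (2 * n).choose (k - 1) : ℚ) / (2 * n)) := by
  refine Finset.sum_nbij' (fun k => 2 * n + 1 - k) (fun k => 2 * n + 1 - k) ?_ ?_ ?_ ?_ ?_
  · intro a ha
    simp only [Finset.mem_filter, Finset.mem_Icc, Nat.even_iff, Nat.odd_iff] at *
    omega
  · intro a ha
    simp only [Finset.mem_filter, Finset.mem_Icc, Nat.even_iff, Nat.odd_iff] at *
    omega
  · intro a ha
    simp only [Finset.mem_filter, Finset.mem_Icc] at ha
    omega
  · intro a ha
    simp only [Finset.mem_filter, Finset.mem_Icc] at ha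
    omega
  · intro a ha
    simp only [Finset.mem_filter, Finset.mem_Icc] at ha
    obtain ⟨⟨h1, h2⟩, -⟩ := ha
    have e1 : 2 * n + 1 - a = 2 * n - (a - 1) := by omega
    have e2 : 2 * n - (a - 1) - 1 = 2 * n - a := by omega
    rw [e1, e2, Nat.choose_symm (by omega), Nat.choose_symm (by omega)]
    ring
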